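/- If the vertices of a translation triangle lie in the plane z = 0 of Sol, then the translation distances between them equal the Euclidean distances, and in particular the triangle inequality holds for such triangles. -/

import Mathlib

/-- Translation distance from the origin to `(x,y,z)` in Sol. -/
noncomputable def solDistO (p : ℝ × ℝ × ℝ) : ℝ :=
  if p.2.2 ≠ 0 then
    (|p.2.2| / |Real.exp p.2.2 - 1|) *
      Real.sqrt (p.1 ^ 2 * Real.exp (2 * p.2.2) + (Real.exp p.2.2 - 1) ^ 2 + p.2.1 ^ 2)
  else Real.sqrt (p.1 ^ 2 + p.2.1 ^ 2)

/-- Translation distance between two points of Sol, computed as `d^t(O, T⁻¹_P(Q))`. -/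
noncomputable def solDist (P Q : ℝ × ℝ × ℝ) : ℝ :=
  solDistO ((Q.1 - P.1) * Real.exp P.2.2, (Q.2.1 - P.2.1) * Real.exp (-P.2.2), Q.2.2 - P.2.2)

lemma key (a b a₁ b₁ : ℝ) : solDist (a, b, 0) (a₁, b₁, 0) =
    Real.sqrt ((a - a₁) ^ 2 + (b - b₁) ^ 2) := by
  simp [solDist, solDistO, Real.exp_zero]
  ring_nf

lemma sqrt_tri (x y x' y' : ℝ) :
    Real.sqrt ((x + x') ^ 2 + (y + y') ^ 2) ≤
      Real.sqrt (x ^ 2 + y ^ 2) + Real.sqrt (x' ^ 2 + y' ^ 2) := by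
  have := norm_add_le (⟨x, y⟩ : ℂ) ⟨x', y'⟩
  simpa [Complex.norm_def, Complex.normSq_mk, Complex.normSq_apply, sq] using this

/-- In the plane `z = 0` of Sol, translation distances are Euclidean distances and the
triangle inequality holds. -/
theorem sol_horizontal_distances_euclidean :
    (∀ a b a₁ b₁ : ℝ, solDist (a, b, 0) (a₁, b₁, 0) =
      Real.sqrt ((a - a₁) ^ 2 + (b - b₁) ^ 2)) ∧
    (∀ a b a₁ b₁ a₂ b₂ : ℝ,
      solDist (a, b, 0) (a₂, b₂, 0) ≤
        solDist (a, b, 0) (a₁, b₁, 0) + solDist (a₁, b₁, 0) (a₂, b₂, 0)) := by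
  refine ⟨key, fun a b a₁ b₁ a₂ b₂ => ?_⟩
  rw [key, key, key]
  have h := sqrt_tri (a - a₁) (b - b₁) (a₁ - a₂) (b₁ - b₂)
  have e1 : a - a₁ + (a₁ - a₂) = a - a₂ := by ring
  have e2 : b - b₁ + (b₁ - b₂) = b - b₂ := by ring
  rwa [e1, e2] at h
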